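/- arXiv:0812.0156 — 6 statements merged into one kernel-verified Lean document; each statement's English description precedes it below -/
import Mathlib

section
/- For every integer k with 0 ≤ k ≤ |𝒯|, the number of tope committees of cardinality k for 𝒯 equals the number of tope committees of cardinality |𝒯| − k for 𝒯. -/
/-- The negation `−T` of a sign vector `T : E → Bool` (`true` = `+`, `false` = `−`). -/
def sgnNeg {E : Type*} (T : E → Bool) : E → Bool := fun e => !T e

/-- The positive part `T⁺` of a sign vector. -/
def positivePart {E : Type*} [Fintype E] [DecidableEq E] (T : E → Bool) : Finset E :=
  Finset.univ.filter fun e => T e = true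

/-- The negative part `T⁻` of a sign vector. -/
def negativePart {E : Type*} [Fintype E] [DecidableEq E] (T : E → Bool) : Finset E :=
  Finset.univ.filter fun e => T e = false

/-- `𝒦` is a tope committee for `𝒯`: `𝒦 ⊆ 𝒯`, and for every `e ∈ E` the number of members
of `𝒦` positive on `e` exceeds the number of members negative on `e`. -/
def IsCommittee {E : Type*} [Fintype E] [DecidableEq E]
    (𝒯 𝒦 : Finset (E → Bool)) : Prop :=
  𝒦 ⊆ 𝒯 ∧ ∀ e : E,
    (𝒦.filter fun K => K e = true).card > (𝒦.filter fun K => K e = false).card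

/-- `𝒜` is a tope anti-committee for `𝒯`: `𝒜 ⊆ 𝒯` and `−𝒜` is a tope committee for `𝒯`. -/
def IsAntiCommittee {E : Type*} [Fintype E] [DecidableEq E]
    (𝒯 𝒜 : Finset (E → Bool)) : Prop :=
  𝒜 ⊆ 𝒯 ∧ IsCommittee 𝒯 (𝒜.image sgnNeg)

/-- For every `k` with `0 ≤ k ≤ |𝒯|`, the number of tope committees of
cardinality `k` for `𝒯` equals the number of tope committees of cardinality `|𝒯| − k`. -/
theorem card_committees_symmetry
    {E : Type*} [Fintype E] [DecidableEq E] [Nonempty E]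
    (𝒯 : Finset (E → Bool)) (h𝒯 : 𝒯.Nonempty)
    (hsym : 𝒯.image sgnNeg = 𝒯) (k : ℕ) (hk : k ≤ 𝒯.card) :
    {𝒦 : Finset (E → Bool) | IsCommittee 𝒯 𝒦 ∧ 𝒦.card = k}.ncard =
      {𝒦 : Finset (E → Bool) | IsCommittee 𝒯 𝒦 ∧ 𝒦.card = 𝒯.card - k}.ncard := by
  classical
  have hinj : Function.Injective (sgnNeg (E := E)) := by
    intro T U h
    funext e
    have := congrFun h e
    simpa [sgnNeg] using this
  set f : Finset (E → Bool) → Finset (E → Bool) := fun 𝒦 => 𝒯 \ 𝒦.image sgnNeg with hf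
  have himg : ∀ {𝒦 : Finset (E → Bool)}, 𝒦 ⊆ 𝒯 → 𝒦.image sgnNeg ⊆ 𝒯 := by
    intro 𝒦 h
    rw [← hsym]
    exact Finset.image_subset_image h
  -- filter of image
  have hfilt : ∀ (s : Finset (E → Bool)) (e : E) (b : Bool),
      ((s.image sgnNeg).filter fun K => K e = b).card
        = (s.filter fun K => K e = !b).card := by
    intro s e b
    rw [Finset.filter_image, Finset.card_image_of_injective _ hinj]
    congr 1
    apply Finset.filter_congr
    intro K _
    simp only [sgnNeg]
    cases b <;> cases hK : K e <;> simp
  -- balance of 𝒯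
  have hbal : ∀ e : E, (𝒯.filter fun K => K e = true).card
      = (𝒯.filter fun K => K e = false).card := by
    intro e
    conv_rhs => rw [← hsym]
    rw [hfilt 𝒯 e false]
    simp
  -- filter of sdiff
  have hsd : ∀ (s : Finset (E → Bool)) (p : (E → Bool) → Prop) [DecidablePred p],
      (𝒯 \ s).filter p = 𝒯.filter p \ s.filter p := by
    intro s p _
    ext x
    simp only [Finset.mem_filter, Finset.mem_sdiff]
    tauto
  -- f sends committees of card c to committees of card 𝒯.card - c
  have hmain : ∀ 𝒦 : Finset (E → Bool), IsCommittee 𝒯 𝒦 →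
      IsCommittee 𝒯 (f 𝒦) ∧ (f 𝒦).card = 𝒯.card - 𝒦.card := by
    intro 𝒦 ⟨hsub, hc⟩
    have himgsub := himg hsub
    refine ⟨⟨Finset.sdiff_subset, ?_⟩, ?_⟩
    · intro e
      have h1 : ((f 𝒦).filter fun K => K e = true).card
          = (𝒯.filter fun K => K e = true).card - (𝒦.filter fun K => K e = false).card := by
        rw [hf]
        simp only
        rw [hsd, Finset.card_sdiff_of_subset (Finset.filter_subset_filter _ himgsub), hfilt]
        simp
      have h2 : ((f 𝒦).filter fun K => K e = false).card
          = (𝒯.filter fun K => K e = false).card - (𝒦.filter fun K => K e = true).card := by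
        rw [hf]
        simp only
        rw [hsd, Finset.card_sdiff_of_subset (Finset.filter_subset_filter _ himgsub), hfilt]
        simp
      have ht := hbal e
      have ha : (𝒦.filter fun K => K e = true).card
          ≤ (𝒯.filter fun K => K e = true).card :=
        Finset.card_le_card (Finset.filter_subset_filter _ hsub)
      have hb : (𝒦.filter fun K => K e = false).card
          ≤ (𝒯.filter fun K => K e = false).card :=
        Finset.card_le_card (Finset.filter_subset_filter _ hsub)
      have hce := hc e
      rw [gt_iff_lt, h2, h1]
      generalize (Finset.filter (fun K => K e = true) 𝒯).card = A at *
      generalize (Finset.filter (fun K => K e = false) 𝒯).card = B at ht ha hb ⊢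
      generalize (Finset.filter (fun K => K e = true) 𝒦).card = a at *
      generalize (Finset.filter (fun K => K e = false) 𝒦).card = b at *
      clear * - ht ha hb hce
      omega
    · show (𝒯 \ 𝒦.image sgnNeg).card = _
      rw [Finset.card_sdiff_of_subset himgsub, Finset.card_image_of_injective _ hinj]
  -- involution
  have hinv : ∀ 𝒦 : Finset (E → Bool), 𝒦 ⊆ 𝒯 → f (f 𝒦) = 𝒦 := by
    intro 𝒦 hsub
    have : (𝒯 \ 𝒦.image sgnNeg).image sgnNeg = 𝒯 \ 𝒦 := by
      rw [Finset.image_sdiff _ _ hinj, hsym]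
      congr 1
      rw [Finset.image_image]
      have : (sgnNeg ∘ sgnNeg : (E → Bool) → E → Bool) = id := by
        funext T e
        simp [sgnNeg]
      rw [this, Finset.image_id]
    show 𝒯 \ (𝒯 \ 𝒦.image sgnNeg).image sgnNeg = 𝒦
    rw [this, Finset.sdiff_sdiff_eq_self hsub]
  -- bijection
  have hset : {𝒦 : Finset (E → Bool) | IsCommittee 𝒯 𝒦 ∧ 𝒦.card = 𝒯.card - k}
      = f '' {𝒦 : Finset (E → Bool) | IsCommittee 𝒯 𝒦 ∧ 𝒦.card = k} := by
    ext 𝒦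
    constructor
    · rintro ⟨hc, hcard⟩
      refine ⟨f 𝒦, ⟨(hmain 𝒦 hc).1, ?_⟩, hinv 𝒦 hc.1⟩
      rw [(hmain 𝒦 hc).2, hcard]
      omega
    · rintro ⟨𝒦', ⟨hc, hcard⟩, rfl⟩
      exact ⟨(hmain 𝒦' hc).1, by rw [(hmain 𝒦' hc).2, hcard]⟩
  rw [hset, Set.ncard_image_of_injOn]
  intro a ha b hb hab
  have := congrArg f hab
  rwa [hinv a ha.1.1, hinv b hb.1.1] at this
end

section
/- Six times the number of three-element tope committees for 𝒯 equals the trace of the cube of the adjacency matrix of the graph Γ(𝒯): 6 · #K*₃(𝒯) = trace(A³), where A is the adjacency matrix of Γ(𝒯). -/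
/-- The graph `Γ(𝒯)`: vertices are the members of `𝒯`, and distinct `T′, T″` are
adjacent iff `(T′)⁺ ∪ (T″)⁺ = E`. -/
def Gamma {E : Type*} [Fintype E] [DecidableEq E] (𝒯 : Finset (E → Bool)) :
    SimpleGraph {T : E → Bool // T ∈ 𝒯} where
  Adj T T' := T ≠ T' ∧ positivePart T.1 ∪ positivePart T'.1 = Finset.univ
  symm := ⟨by rintro T T' ⟨h1, h2⟩; exact ⟨h1.symm, by rwa [Finset.union_comm]⟩⟩
  loopless := ⟨by rintro T ⟨h1, _⟩; exact h1 rfl⟩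

instance {E : Type*} [Fintype E] [DecidableEq E] (𝒯 : Finset (E → Bool)) :
    DecidableRel (Gamma 𝒯).Adj := fun T T' =>
  inferInstanceAs (Decidable (T ≠ T' ∧ positivePart T.1 ∪ positivePart T'.1 = Finset.univ))

section CommitteeAux

variable {E : Type*} [Fintype E] [DecidableEq E]

lemma posUnion_iff {a b : E → Bool} :
    positivePart a ∪ positivePart b = Finset.univ ↔ ∀ e, a e = true ∨ b e = true := by
  simp [Finset.eq_univ_iff_forall, positivePart, Finset.mem_union, Finset.mem_filter]

lemma filter_true_add_filter_false (𝒦 : Finset (E → Bool)) (e : E) :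
    (𝒦.filter fun K => K e = true).card + (𝒦.filter fun K => K e = false).card = 𝒦.card := by
  classical
  have h := Finset.card_filter_add_card_filter_not (s := 𝒦) (p := fun K => K e = true)
  simpa using h

lemma committee_pair {𝒯 𝒦 : Finset (E → Bool)} (hcom : IsCommittee 𝒯 𝒦)
    (h𝒦 : 𝒦.card = 3) {a b : E → Bool} (ha : a ∈ 𝒦) (hb : b ∈ 𝒦) (hab : a ≠ b) :
    ∀ e, a e = true ∨ b e = true := by
  intro e
  by_contra h
  push_neg at h
  obtain ⟨h1, h2⟩ := h
  have h1' : a e = false := by simpa using h1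
  have h2' : b e = false := by simpa using h2
  have hsub : ({a, b} : Finset (E → Bool)) ⊆ 𝒦.filter fun K => K e = false := by
    intro K hK
    simp only [Finset.mem_insert, Finset.mem_singleton] at hK
    rcases hK with rfl | rfl <;> simp [Finset.mem_filter, ha, hb, h1', h2']
  have h2c : 2 ≤ (𝒦.filter fun K => K e = false).card := by
    calc 2 = ({a, b} : Finset (E → Bool)).card := by
            rw [Finset.card_insert_of_notMem (by simpa using hab), Finset.card_singleton]
      _ ≤ _ := Finset.card_le_card hsub
  have hsum := filter_true_add_filter_false 𝒦 e
  have hgt := hcom.2 e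
  generalize (𝒦.filter fun K => K e = true).card = x at *
  generalize (𝒦.filter fun K => K e = false).card = y at *
  omega

lemma committee_of_triangle {𝒯 : Finset (E → Bool)} {a b c : E → Bool}
    (ha : a ∈ 𝒯) (hb : b ∈ 𝒯) (hc : c ∈ 𝒯)
    (hab : a ≠ b) (hac : a ≠ c) (hbc : b ≠ c)
    (h1 : ∀ e, a e = true ∨ b e = true) (h2 : ∀ e, b e = true ∨ c e = true)
    (h3 : ∀ e, a e = true ∨ c e = true) :
    IsCommittee 𝒯 {a, b, c} := by
  constructor
  · intro K hK
    simp only [Finset.mem_insert, Finset.mem_singleton] at hK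
    rcases hK with rfl | rfl | rfl <;> assumption
  · intro e
    have hcard3 : ({a, b, c} : Finset (E → Bool)).card = 3 :=
      Finset.card_eq_three.2 ⟨a, b, c, hab, hac, hbc, rfl⟩
    have hsum := filter_true_add_filter_false ({a, b, c} : Finset (E → Bool)) e
    have hle : (({a, b, c} : Finset (E → Bool)).filter fun K => K e = false).card ≤ 1 := by
      rw [Finset.card_le_one]
      intro K hK K' hK'
      simp only [Finset.mem_filter, Finset.mem_insert, Finset.mem_singleton] at hK hK'
      obtain ⟨hK1, hK2⟩ := hK
      obtain ⟨hK'1, hK'2⟩ := hK'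
      have e1 := h1 e; have e2 := h2 e; have e3 := h3 e
      rcases hK1 with rfl | rfl | rfl <;> rcases hK'1 with rfl | rfl | rfl <;> simp_all
    rw [hcard3] at hsum
    show _ < _
    generalize (Finset.filter (fun K => K e = true) ({a, b, c} : Finset (E → Bool))).card = x at *
    generalize (Finset.filter (fun K => K e = false) ({a, b, c} : Finset (E → Bool))).card = y at *
    omega

end CommitteeAux

set_option maxHeartbeats 1600000 in
/-- `6 · #K*₃(𝒯) = trace(A³)`, where `A` is the adjacency matrix of `Γ(𝒯)`
and `K*₃(𝒯)` is the family of tope committees of cardinality 3 for `𝒯`. -/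
theorem six_mul_card_three_committees_eq_trace_adjMatrix_cube
    {E : Type*} [Fintype E] [DecidableEq E] [Nonempty E]
    (𝒯 : Finset (E → Bool)) (h𝒯 : 𝒯.Nonempty)
    (hsym : 𝒯.image sgnNeg = 𝒯) :
    6 * ({𝒦 : Finset (E → Bool) | IsCommittee 𝒯 𝒦 ∧ 𝒦.card = 3}.ncard : ℤ) =
      Matrix.trace ((Gamma 𝒯).adjMatrix ℤ ^ 3) := by
  classical
  let S : Finset ({T : E → Bool // T ∈ 𝒯} × {T : E → Bool // T ∈ 𝒯} × {T : E → Bool // T ∈ 𝒯}) :=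
    Finset.univ.filter fun p =>
      (Gamma 𝒯).Adj p.1 p.2.1 ∧ (Gamma 𝒯).Adj p.2.1 p.2.2 ∧ (Gamma 𝒯).Adj p.2.2 p.1
  let C : Finset (Finset (E → Bool)) :=
    𝒯.powerset.filter fun 𝒦 => IsCommittee 𝒯 𝒦 ∧ 𝒦.card = 3
  -- Step 1: the set of committees of size 3 has cardinality `C.card`
  have hncard : {𝒦 : Finset (E → Bool) | IsCommittee 𝒯 𝒦 ∧ 𝒦.card = 3}.ncard = C.card := by
    rw [← Set.ncard_coe_finset]
    congr 1
    ext 𝒦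
    simp only [Set.mem_setOf_eq, Finset.coe_filter, Finset.mem_powerset, C]
    exact ⟨fun h => ⟨h.1.1, h⟩, fun h => h.2⟩
  -- Step 2: the trace of `A³` counts directed triangles
  have htrace : Matrix.trace ((Gamma 𝒯).adjMatrix ℤ ^ 3) = (S.card : ℤ) := by
    rw [Finset.card_filter]
    push_cast
    rw [Fintype.sum_prod_type]
    simp only [Fintype.sum_prod_type]
    rw [pow_succ, pow_succ, pow_one]
    rw [Matrix.trace]
    simp only [Matrix.diag_apply, Matrix.mul_apply, SimpleGraph.adjMatrix_apply,
      Finset.sum_mul, Finset.mul_sum]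
    rw [Finset.sum_comm]
    apply Finset.sum_congr rfl
    intro x _
    rw [Finset.sum_comm]
    apply Finset.sum_congr rfl
    intro y _
    apply Finset.sum_congr rfl
    intro z _
    have c1 : (Gamma 𝒯).Adj x z ↔ (Gamma 𝒯).Adj z x := SimpleGraph.adj_comm _ _ _
    have c2 : (Gamma 𝒯).Adj z y ↔ (Gamma 𝒯).Adj y z := SimpleGraph.adj_comm _ _ _
    have c3 : (Gamma 𝒯).Adj y x ↔ (Gamma 𝒯).Adj x y := SimpleGraph.adj_comm _ _ _
    by_cases h1 : (Gamma 𝒯).Adj x y <;> by_cases h2 : (Gamma 𝒯).Adj y z <;>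
      by_cases h3 : (Gamma 𝒯).Adj z x <;> simp [h1, h2, h3, c1, c2, c3]
  -- Step 3: each directed triangle maps to a committee of size 3
  have hmem : ∀ p ∈ S, ({p.1.1, p.2.1.1, p.2.2.1} : Finset (E → Bool)) ∈ C := by
    rintro ⟨x, y, z⟩ hp
    simp only [S, Finset.mem_filter, Finset.mem_univ, true_and] at hp
    obtain ⟨h1, h2, h3⟩ := hp
    have d1 : x.1 ≠ y.1 := fun h => h1.1 (Subtype.ext h)
    have d2 : y.1 ≠ z.1 := fun h => h2.1 (Subtype.ext h)
    have d3 : z.1 ≠ x.1 := fun h => h3.1 (Subtype.ext h)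
    have u1 : ∀ e, x.1 e = true ∨ y.1 e = true := posUnion_iff.mp h1.2
    have u2 : ∀ e, y.1 e = true ∨ z.1 e = true := posUnion_iff.mp h2.2
    have u3 : ∀ e, x.1 e = true ∨ z.1 e = true := fun e => (posUnion_iff.mp h3.2 e).symm
    have hcom : IsCommittee 𝒯 {x.1, y.1, z.1} :=
      committee_of_triangle x.2 y.2 z.2 d1 d3.symm d2 u1 u2 u3
    simp only [C, Finset.mem_filter, Finset.mem_powerset]
    exact ⟨hcom.1, hcom, Finset.card_eq_three.2 ⟨x.1, y.1, z.1, d1, d3.symm, d2, rfl⟩⟩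
  -- Step 4: every committee of size 3 has exactly 6 directed triangles above it
  have hfiber : ∀ 𝒦 ∈ C,
      (S.filter fun p => ({p.1.1, p.2.1.1, p.2.2.1} : Finset (E → Bool)) = 𝒦).card = 6 := by
    intro 𝒦 h𝒦
    simp only [C, Finset.mem_filter, Finset.mem_powerset] at h𝒦
    obtain ⟨hsub, hcom, hcard⟩ := h𝒦
    obtain ⟨a, b, c, hab, hac, hbc, rfl⟩ := Finset.card_eq_three.mp hcard
    have ha : a ∈ 𝒯 := hsub (by simp)
    have hb : b ∈ 𝒯 := hsub (by simp)
    have hc : c ∈ 𝒯 := hsub (by simp)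
    have ma : a ∈ ({a, b, c} : Finset (E → Bool)) := by simp
    have mb : b ∈ ({a, b, c} : Finset (E → Bool)) := by simp
    have mc : c ∈ ({a, b, c} : Finset (E → Bool)) := by simp
    have adjab : (Gamma 𝒯).Adj ⟨a, ha⟩ ⟨b, hb⟩ :=
      ⟨fun h => hab (congrArg Subtype.val h),
        posUnion_iff.mpr (committee_pair hcom hcard ma mb hab)⟩
    have adjbc : (Gamma 𝒯).Adj ⟨b, hb⟩ ⟨c, hc⟩ :=
      ⟨fun h => hbc (congrArg Subtype.val h),
        posUnion_iff.mpr (committee_pair hcom hcard mb mc hbc)⟩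
    have adjca : (Gamma 𝒯).Adj ⟨c, hc⟩ ⟨a, ha⟩ :=
      ⟨fun h => hac (congrArg Subtype.val h).symm,
        posUnion_iff.mpr (committee_pair hcom hcard mc ma (Ne.symm hac))⟩
    have adjba := adjab.symm
    have adjcb := adjbc.symm
    have adjac := adjca.symm
    have hset : (S.filter fun p => ({p.1.1, p.2.1.1, p.2.2.1} : Finset (E → Bool)) = {a, b, c}) =
        ({(⟨a, ha⟩, ⟨b, hb⟩, ⟨c, hc⟩), (⟨a, ha⟩, ⟨c, hc⟩, ⟨b, hb⟩),
          (⟨b, hb⟩, ⟨a, ha⟩, ⟨c, hc⟩), (⟨b, hb⟩, ⟨c, hc⟩, ⟨a, ha⟩),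
          (⟨c, hc⟩, ⟨a, ha⟩, ⟨b, hb⟩), (⟨c, hc⟩, ⟨b, hb⟩, ⟨a, ha⟩)} :
          Finset ({T : E → Bool // T ∈ 𝒯} × {T : E → Bool // T ∈ 𝒯} × {T : E → Bool // T ∈ 𝒯})) := by
      ext ⟨p1, p2, p3⟩
      simp only [S, Finset.mem_filter, Finset.mem_univ, true_and, Finset.mem_insert,
        Finset.mem_singleton, Prod.mk.injEq]
      constructor
      · rintro ⟨⟨h1, h2, h3⟩, hs⟩
        have d1 : p1.1 ≠ p2.1 := fun h => h1.1 (Subtype.ext h)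
        have d2 : p2.1 ≠ p3.1 := fun h => h2.1 (Subtype.ext h)
        have d3 : p3.1 ≠ p1.1 := fun h => h3.1 (Subtype.ext h)
        have m1 : p1.1 = a ∨ p1.1 = b ∨ p1.1 = c := by
          have : p1.1 ∈ ({a, b, c} : Finset (E → Bool)) := by rw [← hs]; simp
          simpa using this
        have m2 : p2.1 = a ∨ p2.1 = b ∨ p2.1 = c := by
          have : p2.1 ∈ ({a, b, c} : Finset (E → Bool)) := by rw [← hs]; simp
          simpa using this
        have m3 : p3.1 = a ∨ p3.1 = b ∨ p3.1 = c := by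
          have : p3.1 ∈ ({a, b, c} : Finset (E → Bool)) := by rw [← hs]; simp
          simpa using this
        rcases m1 with e1 | e1 | e1 <;> rcases m2 with e2 | e2 | e2 <;>
          rcases m3 with e3 | e3 | e3 <;>
          first
          | exact absurd (e1.trans e2.symm) d1
          | exact absurd (e2.trans e3.symm) d2
          | exact absurd (e3.trans e1.symm) d3
          | exact Or.inl ⟨Subtype.ext e1, Subtype.ext e2, Subtype.ext e3⟩
          | exact Or.inr (Or.inl ⟨Subtype.ext e1, Subtype.ext e2, Subtype.ext e3⟩)
          | exact Or.inr (Or.inr (Or.inl ⟨Subtype.ext e1, Subtype.ext e2, Subtype.ext e3⟩))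
          | exact Or.inr (Or.inr (Or.inr (Or.inl ⟨Subtype.ext e1, Subtype.ext e2, Subtype.ext e3⟩)))
          | exact Or.inr (Or.inr (Or.inr (Or.inr (Or.inl ⟨Subtype.ext e1, Subtype.ext e2, Subtype.ext e3⟩))))
          | exact Or.inr (Or.inr (Or.inr (Or.inr (Or.inr ⟨Subtype.ext e1, Subtype.ext e2, Subtype.ext e3⟩))))
      · rintro (⟨rfl, rfl, rfl⟩ | ⟨rfl, rfl, rfl⟩ | ⟨rfl, rfl, rfl⟩ |
          ⟨rfl, rfl, rfl⟩ | ⟨rfl, rfl, rfl⟩ | ⟨rfl, rfl, rfl⟩) <;>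
          exact ⟨⟨by assumption, by assumption, by assumption⟩,
            by ext t; simp; try tauto⟩
    rw [hset]
    have hab' : (⟨a, ha⟩ : {T : E → Bool // T ∈ 𝒯}) ≠ ⟨b, hb⟩ := fun h => hab (congrArg Subtype.val h)
    have hac' : (⟨a, ha⟩ : {T : E → Bool // T ∈ 𝒯}) ≠ ⟨c, hc⟩ := fun h => hac (congrArg Subtype.val h)
    have hbc' : (⟨b, hb⟩ : {T : E → Bool // T ∈ 𝒯}) ≠ ⟨c, hc⟩ := fun h => hbc (congrArg Subtype.val h)
    rw [Finset.card_insert_of_notMem (by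
        simp [Prod.ext_iff, hab', hac', hbc', hab'.symm, hac'.symm, hbc'.symm])]
    rw [Finset.card_insert_of_notMem (by
        simp [Prod.ext_iff, hab', hac', hbc', hab'.symm, hac'.symm, hbc'.symm])]
    rw [Finset.card_insert_of_notMem (by
        simp [Prod.ext_iff, hab', hac', hbc', hab'.symm, hac'.symm, hbc'.symm])]
    rw [Finset.card_insert_of_notMem (by
        simp [Prod.ext_iff, hab', hac', hbc', hab'.symm, hac'.symm, hbc'.symm])]
    rw [Finset.card_insert_of_notMem (by
        simp [Prod.ext_iff, hab', hac', hbc', hab'.symm, hac'.symm, hbc'.symm])]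
    rw [Finset.card_singleton]
  have hScard : S.card = 6 * C.card := by
    rw [Finset.card_eq_sum_card_fiberwise hmem]
    rw [Finset.sum_congr rfl hfiber, Finset.sum_const, smul_eq_mul, mul_comm]
  rw [hncard, htrace, hScard]
  push_cast
  ring
end

section
/- The vertex set of any odd cycle in the graph Γ(𝒯) is a tope committee for 𝒯; that is, if T₀, T₁, …, T₂ₘ are distinct members of 𝒯 such that Tᵢ and Tᵢ₊₁ (indices modulo 2m+1) are adjacent in Γ(𝒯) for all i, then {T₀, T₁, …, T₂ₘ} is a tope committee for 𝒯. -/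
/-- The vertex set of any odd cycle in `Γ(𝒯)` is a tope committee for `𝒯`:
if `T₀, …, T₂ₘ` are distinct members of `𝒯` with `Tᵢ` adjacent to `Tᵢ₊₁` (indices mod
`2m+1`) in `Γ(𝒯)` for all `i`, then `{T₀, …, T₂ₘ}` is a tope committee for `𝒯`. -/
theorem odd_cycle_is_committee
    {E : Type*} [Fintype E] [DecidableEq E] [Nonempty E]
    (𝒯 : Finset (E → Bool)) (h𝒯 : 𝒯.Nonempty)
    (hsym : 𝒯.image sgnNeg = 𝒯)
    (m : ℕ) (T : Fin (2 * m + 1) → E → Bool)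
    (hmem : ∀ i, T i ∈ 𝒯) (hinj : Function.Injective T)
    (hadj : ∀ i, (Gamma 𝒯).Adj ⟨T i, hmem i⟩ ⟨T (i + 1), hmem (i + 1)⟩) :
    IsCommittee 𝒯 (Finset.image T Finset.univ) := by

  constructor
  · intro K hK
    simp only [Finset.mem_image] at hK
    obtain ⟨i, _, rfl⟩ := hK
    exact hmem i
  · intro e
    have key : ∀ p : Bool, ((Finset.image T Finset.univ).filter fun K => K e = p).card
        = (Finset.univ.filter fun i => T i e = p).card := by
      intro p
      rw [Finset.filter_image, Finset.card_image_of_injective _ hinj]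
    rw [key true, key false]
    set S := Finset.univ.filter fun i : Fin (2 * m + 1) => T i e = false with hS
    have hindep : ∀ i ∈ S, i + 1 ∉ S := by
      intro i hi hi1
      simp only [hS, Finset.mem_filter] at hi hi1
      have h2 := (hadj i).2
      have : e ∈ positivePart (T i) ∪ positivePart (T (i + 1)) := by
        rw [h2]; exact Finset.mem_univ e
      simp only [positivePart, Finset.mem_union, Finset.mem_filter] at this
      rcases this with h | h
      · rw [hi.2] at h; exact Bool.false_ne_true h.2
      · rw [hi1.2] at h; exact Bool.false_ne_true h.2
    have hcard : S.card ≤ m := by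
      have hmap : ∀ i ∈ S, i + 1 ∈ Sᶜ := by
        intro i hi
        simpa using hindep i hi
      have hinj2 : ∀ a ∈ S, ∀ b ∈ S, a + 1 = b + 1 → a = b := by
        intro a _ b _ h
        exact add_right_cancel h
      have hle : S.card ≤ Sᶜ.card := Finset.card_le_card_of_injOn _ hmap
        (fun a ha b hb h => hinj2 a ha b hb h)
      have htot : S.card + Sᶜ.card = 2 * m + 1 := by
        rw [Finset.card_add_card_compl]; simp
      omega
    have hcomp : (Finset.univ.filter fun i : Fin (2 * m + 1) => T i e = true) = Sᶜ := by
      ext i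
      simp [hS, Finset.mem_compl]
    rw [hcomp]
    have htot : S.card + Sᶜ.card = 2 * m + 1 := by
      rw [Finset.card_add_card_compl]; simp
    omega
end

section
/- If the induced subgraph Γ⁺_max(𝒯) of Γ(𝒯) on the vertex set max⁺(𝒯) is connected, then the graph Γ(𝒯) is connected. -/
/-- `max⁺(𝒯)`: the members of `𝒯` whose positive part is inclusion-maximal in
the family of positive parts of members of `𝒯`. -/
def maxPos {E : Type*} [Fintype E] [DecidableEq E] (𝒯 : Finset (E → Bool)) :
    Finset (E → Bool) :=
  𝒯.filter fun T => ∀ S ∈ 𝒯, positivePart T ⊆ positivePart S → positivePart T = positivePart S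

lemma exists_maxPos {E : Type*} [Fintype E] [DecidableEq E] (𝒯 : Finset (E → Bool))
    (T : E → Bool) (hT : T ∈ 𝒯) :
    ∃ S ∈ maxPos 𝒯, positivePart T ⊆ positivePart S := by
  obtain ⟨S, hS, hmax⟩ := Finset.exists_max_image
    (𝒯.filter fun S => positivePart T ⊆ positivePart S)
    (fun S => (positivePart S).card) ⟨T, by simp [hT]⟩
  simp only [Finset.mem_filter] at hS
  refine ⟨S, ?_, hS.2⟩
  simp only [maxPos, Finset.mem_filter]
  refine ⟨hS.1, fun S' hS' hsub => ?_⟩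
  have hS'mem : S' ∈ 𝒯.filter fun S => positivePart T ⊆ positivePart S := by
    simp [hS', hS.2.trans hsub]
  exact Finset.eq_of_subset_of_card_le hsub (hmax S' hS'mem)

lemma adj_to_maxPos {E : Type*} [Fintype E] [DecidableEq E]
    (𝒯 : Finset (E → Bool)) (hsym : 𝒯.image sgnNeg = 𝒯)
    (hplus : (fun _ : E => true) ∉ 𝒯) (T : {T : E → Bool // T ∈ 𝒯}) :
    ∃ M : {T : E → Bool // T ∈ 𝒯}, M.1 ∈ maxPos 𝒯 ∧ (Gamma 𝒯).Adj T M := by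
  have hneg : sgnNeg T.1 ∈ 𝒯 := by
    have := Finset.mem_image_of_mem sgnNeg T.2
    rwa [hsym] at this
  obtain ⟨M, hM, hsub⟩ := exists_maxPos 𝒯 (sgnNeg T.1) hneg
  have hM𝒯 : M ∈ 𝒯 := (Finset.mem_filter.mp hM).1
  refine ⟨⟨M, hM𝒯⟩, hM, ?_, ?_⟩
  · intro h
    have hTM : T.1 = M := congrArg Subtype.val h
    apply hplus
    have : T.1 = fun _ => true := by
      funext e
      by_contra he
      rw [Bool.not_eq_true] at he
      have h1 : e ∈ positivePart (sgnNeg T.1) := by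
        simp [positivePart, sgnNeg, he]
      have h2 := hsub h1
      simp only [positivePart, Finset.mem_filter] at h2
      rw [← hTM] at h2
      rw [he] at h2
      exact Bool.false_ne_true h2.2
    rw [← this]; exact T.2
  · apply Finset.eq_univ_of_forall
    intro e
    by_cases he : T.1 e = true
    · apply Finset.mem_union_left
      simp [positivePart, he]
    · rw [Bool.not_eq_true] at he
      apply Finset.mem_union_right
      apply hsub
      simp [positivePart, sgnNeg, he]

/-- If the subgraph `Γ⁺_max(𝒯)` of `Γ(𝒯)` induced on the vertex set
`max⁺(𝒯)` is connected, then the graph `Γ(𝒯)` is connected. -/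
theorem gamma_connected_of_gammaMax_connected
    {E : Type*} [Fintype E] [DecidableEq E] [Nonempty E]
    (𝒯 : Finset (E → Bool)) (h𝒯 : 𝒯.Nonempty)
    (hsym : 𝒯.image sgnNeg = 𝒯)
    (hplus : (fun _ : E => true) ∉ 𝒯)
    (hconn : ((Gamma 𝒯).induce {T : {T : E → Bool // T ∈ 𝒯} | T.1 ∈ maxPos 𝒯}).Connected) :
    (Gamma 𝒯).Connected := by
  obtain ⟨T0, hT0⟩ := h𝒯
  have : Nonempty {T : E → Bool // T ∈ 𝒯} := ⟨⟨T0, hT0⟩⟩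
  refine ⟨fun T T' => ?_⟩
  obtain ⟨M, hM, hadj⟩ := adj_to_maxPos 𝒯 hsym hplus T
  obtain ⟨M', hM', hadj'⟩ := adj_to_maxPos 𝒯 hsym hplus T'
  have hreach : ((Gamma 𝒯).induce {T : {T : E → Bool // T ∈ 𝒯} | T.1 ∈ maxPos 𝒯}).Reachable
      ⟨M, hM⟩ ⟨M', hM'⟩ := hconn.preconnected _ _
  have : (Gamma 𝒯).Reachable M M' := by
    have := hreach.map (SimpleGraph.Embedding.induce
      {T : {T : E → Bool // T ∈ 𝒯} | T.1 ∈ maxPos 𝒯}).toHom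
    simpa using this
  exact (hadj.reachable.trans this).trans hadj'.reachable.symm
end

section
/- The number of three-element tope committees 𝒦 for 𝒯 with 𝒦 ⊆ max⁺(𝒯) equals the number of 3-element families {D₁, D₂, D₃} of pairwise disjoint subsets of E such that each Dᵢ is the negative part T⁻ of some T ∈ max⁺(𝒯). -/
lemma negPart_inj {E : Type*} [Fintype E] [DecidableEq E] :
    Function.Injective (negativePart (E := E)) := by
  intro T S h
  funext e
  have h2 : (e ∈ negativePart T) ↔ (e ∈ negativePart S) := by rw [h]
  simp only [negativePart, Finset.mem_filter, Finset.mem_univ, true_and] at h2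
  cases hT : T e <;> cases hS : S e <;> simp_all

lemma filter_bool_sum {E : Type*} [Fintype E] [DecidableEq E]
    (𝒦 : Finset (E → Bool)) (e : E) :
    (𝒦.filter fun K => K e = true).card + (𝒦.filter fun K => K e = false).card = 𝒦.card := by
  have h := Finset.card_filter_add_card_filter_not (s := 𝒦) (p := fun K => K e = true)
  have h2 : 𝒦.filter (fun K => ¬ K e = true) = 𝒦.filter (fun K => K e = false) := by
    apply Finset.filter_congr
    intro K _
    cases K e <;> simp
  rw [← h2]
  exact h

/-- The number of three-element tope committees `𝒦` for `𝒯` with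
`𝒦 ⊆ max⁺(𝒯)` equals the number of 3-element families `{D₁, D₂, D₃}` of pairwise
disjoint subsets of `E` such that each `Dᵢ` is the negative part `T⁻` of some
`T ∈ max⁺(𝒯)`. -/
theorem card_three_committees_in_maxPos_eq_card_disjoint_negativePart_families
    {E : Type*} [Fintype E] [DecidableEq E] [Nonempty E]
    (𝒯 : Finset (E → Bool)) (h𝒯 : 𝒯.Nonempty)
    (hsym : 𝒯.image sgnNeg = 𝒯) :
    {𝒦 : Finset (E → Bool) | IsCommittee 𝒯 𝒦 ∧ 𝒦.card = 3 ∧ 𝒦 ⊆ maxPos 𝒯}.ncard =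
      {D : Finset (Finset E) | D.card = 3 ∧
        (∀ d ∈ D, ∃ T ∈ maxPos 𝒯, negativePart T = d) ∧
        ∀ d ∈ D, ∀ d' ∈ D, d ≠ d' → d ∩ d' = ∅}.ncard := by
  have hmax : maxPos 𝒯 ⊆ 𝒯 := Finset.filter_subset _ _
  have himg : {D : Finset (Finset E) | D.card = 3 ∧
        (∀ d ∈ D, ∃ T ∈ maxPos 𝒯, negativePart T = d) ∧
        ∀ d ∈ D, ∀ d' ∈ D, d ≠ d' → d ∩ d' = ∅} =
      (fun 𝒦 : Finset (E → Bool) => 𝒦.image negativePart) ''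
        {𝒦 : Finset (E → Bool) | IsCommittee 𝒯 𝒦 ∧ 𝒦.card = 3 ∧ 𝒦 ⊆ maxPos 𝒯} := by
    ext D
    simp only [Set.mem_setOf_eq, Set.mem_image]
    constructor
    · rintro ⟨hcard, hmem, hdisj⟩
      refine ⟨(maxPos 𝒯).filter (fun T => negativePart T ∈ D), ?_, ?_⟩
      · have hfK : ((maxPos 𝒯).filter (fun T => negativePart T ∈ D)).image negativePart = D := by
          ext d
          simp only [Finset.mem_image, Finset.mem_filter]
          constructor
          · rintro ⟨T, ⟨_, hTD⟩, rfl⟩; exact hTD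
          · intro hd
            obtain ⟨T, hT, rfl⟩ := hmem d hd
            exact ⟨T, ⟨hT, hd⟩, rfl⟩
        have hKcard : ((maxPos 𝒯).filter (fun T => negativePart T ∈ D)).card = 3 := by
          rw [← Finset.card_image_of_injective _ negPart_inj, hfK, hcard]
        refine ⟨⟨(Finset.filter_subset _ _).trans hmax, ?_⟩, hKcard, Finset.filter_subset _ _⟩
        intro e
        have hsum := filter_bool_sum ((maxPos 𝒯).filter (fun T => negativePart T ∈ D)) e
        rw [hKcard] at hsum
        have hle : (((maxPos 𝒯).filter (fun T => negativePart T ∈ D)).filter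
            fun K => K e = false).card ≤ 1 := by
          apply Finset.card_le_one.mpr
          intro K hK K' hK'
          simp only [Finset.mem_filter] at hK hK'
          by_contra hne
          have hd : negativePart K ≠ negativePart K' := fun h => hne (negPart_inj h)
          have he : e ∈ negativePart K ∩ negativePart K' := by
            simp [negativePart, hK.2, hK'.2]
          have := hdisj _ hK.1.2 _ hK'.1.2 hd
          rw [this] at he
          exact absurd he (Finset.notMem_empty e)
        set a := (((maxPos 𝒯).filter (fun T => negativePart T ∈ D)).filter
          fun K => K e = true).card
        set b := (((maxPos 𝒯).filter (fun T => negativePart T ∈ D)).filter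
          fun K => K e = false).card
        clear_value a b
        omega
      · ext d
        simp only [Finset.mem_image, Finset.mem_filter]
        constructor
        · rintro ⟨T, ⟨_, hTD⟩, rfl⟩; exact hTD
        · intro hd
          obtain ⟨T, hT, rfl⟩ := hmem d hd
          exact ⟨T, ⟨hT, hd⟩, rfl⟩
    · rintro ⟨𝒦, ⟨⟨hsub, hcomm⟩, hcard, hmaxsub⟩, rfl⟩
      refine ⟨by rw [Finset.card_image_of_injective _ negPart_inj, hcard], ?_, ?_⟩
      · intro d hd
        obtain ⟨K, hK, rfl⟩ := Finset.mem_image.mp hd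
        exact ⟨K, hmaxsub hK, rfl⟩
      · intro d hd d' hd' hne
        obtain ⟨K, hK, rfl⟩ := Finset.mem_image.mp hd
        obtain ⟨K', hK', rfl⟩ := Finset.mem_image.mp hd'
        by_contra hcap
        obtain ⟨e, he⟩ := Finset.nonempty_iff_ne_empty.mpr hcap
        simp only [Finset.mem_inter, negativePart, Finset.mem_filter, Finset.mem_univ,
          true_and] at he
        have hKne : K ≠ K' := fun h => hne (by rw [h])
        have h2 : 2 ≤ (𝒦.filter fun K => K e = false).card := by
          have : ({K, K'} : Finset (E → Bool)) ⊆ 𝒦.filter fun K => K e = false := by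
            intro x hx
            simp only [Finset.mem_insert, Finset.mem_singleton] at hx
            rcases hx with rfl | rfl <;> simp [Finset.mem_filter, hK, hK', he.1, he.2]
          calc 2 = ({K, K'} : Finset (E → Bool)).card := by
                  rw [Finset.card_insert_of_notMem (by simpa using hKne)]; simp
            _ ≤ _ := Finset.card_le_card this
        have hsum := filter_bool_sum 𝒦 e
        rw [hcard] at hsum
        have := hcomm e
        set a := (𝒦.filter fun K => K e = true).card
        set b := (𝒦.filter fun K => K e = false).card
        clear_value a b
        omega
  rw [himg]
  exact (Set.ncard_image_of_injOn
    ((Finset.image_injective negPart_inj).injOn)).symm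
end

section
/- Three times the number of three-element tope committees 𝒦 for 𝒯 with 𝒦 ⊆ max⁺(𝒯) equals the sum, over all 2-element subsets {T₁, T₂} of max⁺(𝒯) with T₁⁻ ∩ T₂⁻ = ∅, of the number of T₃ ∈ max⁺(𝒯) whose positive part contains T₁⁻ ∪ T₂⁻: 3 · #{𝒦 ∈ K*₃(𝒯) : 𝒦 ⊆ max⁺(𝒯)} = Σ_{{T₁,T₂} ⊆ max⁺(𝒯), T₁⁻ ∩ T₂⁻ = ∅} #{T₃ ∈ max⁺(𝒯) : T₃⁺ ⊇ T₁⁻ ∪ T₂⁻}. (This is the lattice-free form of the paper's Proposition, where coatoms of the augmented lattice of convex sets containing D₁ ∨ D₂ correspond to members of max⁺(𝒯) whose positive part contains T₁⁻ ∪ T₂⁻.) -/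
section Aux

variable {E : Type*} [Fintype E] [DecidableEq E]

lemma mem_negativePart {T : E → Bool} {e : E} : e ∈ negativePart T ↔ T e = false := by
  simp [negativePart]

lemma mem_positivePart {T : E → Bool} {e : E} : e ∈ positivePart T ↔ T e = true := by
  simp [positivePart]

lemma neg_subset_pos_iff {T₁ T₂ : E → Bool} :
    negativePart T₁ ⊆ positivePart T₂ ↔ negativePart T₁ ∩ negativePart T₂ = ∅ := by
  constructor
  · intro h
    ext e
    simp only [Finset.mem_inter, Finset.notMem_empty, iff_false, not_and]
    intro h1 h2
    have := h h1
    rw [mem_positivePart] at this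
    rw [mem_negativePart] at h2
    simp [this] at h2
  · intro h e he
    rw [mem_positivePart]
    by_contra hc
    have hf : T₂ e = false := by cases hT : T₂ e <;> simp_all
    have : e ∈ negativePart T₁ ∩ negativePart T₂ := by
      simp [Finset.mem_inter, he, mem_negativePart, hf]
    rw [h] at this
    exact absurd this (Finset.notMem_empty e)

lemma committee3_iff (𝒯 𝒦 : Finset (E → Bool)) (h3 : 𝒦.card = 3) (hsub : 𝒦 ⊆ 𝒯) :
    IsCommittee 𝒯 𝒦 ↔
      ∀ T₁ ∈ 𝒦, ∀ T₂ ∈ 𝒦, T₁ ≠ T₂ → negativePart T₁ ∩ negativePart T₂ = ∅ := by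
  constructor
  · rintro ⟨-, h⟩ T₁ h1 T₂ h2 hne
    by_contra hc
    obtain ⟨e, he⟩ := Finset.nonempty_iff_ne_empty.mpr hc
    rw [Finset.mem_inter, mem_negativePart, mem_negativePart] at he
    have hpair : ({T₁, T₂} : Finset (E → Bool)) ⊆ 𝒦.filter fun K => K e = false := by
      intro K hK
      rcases Finset.mem_insert.mp hK with rfl | hK
      · exact Finset.mem_filter.mpr ⟨h1, he.1⟩
      · rw [Finset.mem_singleton] at hK
        subst hK
        exact Finset.mem_filter.mpr ⟨h2, he.2⟩
    have h2' : 2 ≤ (𝒦.filter fun K => K e = false).card := by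
      calc 2 = ({T₁, T₂} : Finset (E → Bool)).card := (Finset.card_pair hne).symm
        _ ≤ _ := Finset.card_le_card hpair
    have hsum := filter_true_add_filter_false 𝒦 e
    have := h e
    linarith
  · intro hpw
    refine ⟨hsub, fun e => ?_⟩
    have hle1 : (𝒦.filter fun K => K e = false).card ≤ 1 := by
      rw [Finset.card_le_one]
      intro a ha b hb
      rw [Finset.mem_filter] at ha hb
      by_contra hab
      have := hpw a ha.1 b hb.1 hab
      have : e ∈ negativePart a ∩ negativePart b := by
        rw [Finset.mem_inter, mem_negativePart, mem_negativePart]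
        exact ⟨ha.2, hb.2⟩
      rw [hpw a ha.1 b hb.1 hab] at this
      exact absurd this (Finset.notMem_empty e)
    have hsum := filter_true_add_filter_false 𝒦 e
    linarith

end Aux

/-- `3 · #{𝒦 ∈ K*₃(𝒯) : 𝒦 ⊆ max⁺(𝒯)}` equals the sum, over all 2-element
subsets `{T₁, T₂}` of `max⁺(𝒯)` with `T₁⁻ ∩ T₂⁻ = ∅`, of
`#{T₃ ∈ max⁺(𝒯) : T₃⁺ ⊇ T₁⁻ ∪ T₂⁻}`. -/
theorem three_mul_card_three_committees_in_maxPos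
    {E : Type*} [Fintype E] [DecidableEq E] [Nonempty E]
    (𝒯 : Finset (E → Bool)) (h𝒯 : 𝒯.Nonempty)
    (hsym : 𝒯.image sgnNeg = 𝒯)
    (hplus : (fun _ : E => true) ∉ 𝒯) :
    3 * {𝒦 : Finset (E → Bool) | IsCommittee 𝒯 𝒦 ∧ 𝒦.card = 3 ∧ 𝒦 ⊆ maxPos 𝒯}.ncard =
      ∑ P ∈ (Finset.powersetCard 2 (maxPos 𝒯)).filter
          (fun P => ∀ T₁ ∈ P, ∀ T₂ ∈ P, T₁ ≠ T₂ → negativePart T₁ ∩ negativePart T₂ = ∅),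
        ((maxPos 𝒯).filter fun T₃ => ∀ T ∈ P, negativePart T ⊆ positivePart T₃).card := by
  classical
  have hMT : maxPos 𝒯 ⊆ 𝒯 := Finset.filter_subset _ _
  -- members of 𝒯 have nonempty negative part
  have hneg : ∀ T ∈ 𝒯, negativePart T ≠ ∅ := by
    intro T hT hc
    apply hplus
    have : T = fun _ => true := by
      funext e
      have : e ∉ negativePart T := by rw [hc]; exact Finset.notMem_empty e
      rw [mem_negativePart] at this
      cases h : T e
      · exact absurd h this
      · rfl
    rwa [this] at hT
  set B := (Finset.powersetCard 3 (maxPos 𝒯)).filter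
      (fun 𝒦 => ∀ T₁ ∈ 𝒦, ∀ T₂ ∈ 𝒦, T₁ ≠ T₂ → negativePart T₁ ∩ negativePart T₂ = ∅)
      with hB
  have hset : {𝒦 : Finset (E → Bool) | IsCommittee 𝒯 𝒦 ∧ 𝒦.card = 3 ∧ 𝒦 ⊆ maxPos 𝒯}
      = ↑B := by
    ext 𝒦
    simp only [Set.mem_setOf_eq, hB, Finset.coe_filter, Finset.mem_powersetCard]
    constructor
    · rintro ⟨hc, h3, hsub⟩
      exact ⟨⟨hsub, h3⟩,
        (committee3_iff 𝒯 𝒦 h3 (hsub.trans hMT)).mp hc⟩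
    · rintro ⟨⟨hsub, h3⟩, hpw⟩
      exact ⟨(committee3_iff 𝒯 𝒦 h3 (hsub.trans hMT)).mpr hpw, h3, hsub⟩
  rw [hset, Set.ncard_coe_finset]
  set A := (Finset.powersetCard 2 (maxPos 𝒯)).filter
      (fun P => ∀ T₁ ∈ P, ∀ T₂ ∈ P, T₁ ≠ T₂ → negativePart T₁ ∩ negativePart T₂ = ∅)
      with hA
  have hcard3 : ∀ 𝒦 ∈ B, 𝒦.card = 3 := by
    intro 𝒦 h𝒦
    rw [hB, Finset.mem_filter, Finset.mem_powersetCard] at h𝒦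
    exact h𝒦.1.2
  have h1 : 3 * B.card = (B.sigma fun 𝒦 => 𝒦).card := by
    rw [Finset.card_sigma, Finset.sum_congr rfl hcard3, Finset.sum_const, smul_eq_mul,
      mul_comm]
  have h2 : ∑ P ∈ A, ((maxPos 𝒯).filter fun T₃ => ∀ T ∈ P, negativePart T ⊆ positivePart T₃).card
      = (A.sigma fun P => (maxPos 𝒯).filter fun T₃ => ∀ T ∈ P, negativePart T ⊆ positivePart T₃).card := by
    rw [Finset.card_sigma]
  rw [h1, h2]
  refine Finset.card_bij' (fun x _ => ⟨x.1.erase x.2, x.2⟩)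
    (fun y _ => ⟨insert y.2 y.1, y.2⟩) ?_ ?_ ?_ ?_
  · rintro ⟨𝒦, T⟩ hx
    rw [Finset.mem_sigma] at hx
    obtain ⟨h𝒦, hT⟩ := hx
    rw [hB, Finset.mem_filter, Finset.mem_powersetCard] at h𝒦
    obtain ⟨⟨hsub, h3⟩, hpw⟩ := h𝒦
    rw [Finset.mem_sigma]
    constructor
    · rw [hA, Finset.mem_filter, Finset.mem_powersetCard]
      refine ⟨⟨(Finset.erase_subset _ _).trans hsub, ?_⟩, ?_⟩
      · rw [Finset.card_erase_of_mem hT, h3]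
      · intro T₁ h1' T₂ h2' hne
        exact hpw T₁ (Finset.mem_of_mem_erase h1') T₂ (Finset.mem_of_mem_erase h2') hne
    · rw [Finset.mem_filter]
      refine ⟨hsub hT, ?_⟩
      intro T' hT'
      rw [neg_subset_pos_iff]
      exact hpw T' (Finset.mem_of_mem_erase hT') T hT (Finset.ne_of_mem_erase hT')
  · rintro ⟨P, T₃⟩ hy
    rw [Finset.mem_sigma] at hy
    obtain ⟨hP, hT₃⟩ := hy
    rw [hA, Finset.mem_filter, Finset.mem_powersetCard] at hP
    obtain ⟨⟨hPsub, hP2⟩, hPpw⟩ := hP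
    rw [Finset.mem_filter] at hT₃
    obtain ⟨hT₃M, hT₃cov⟩ := hT₃
    have hT₃notP : T₃ ∉ P := by
      intro hc
      have := (neg_subset_pos_iff.mp (hT₃cov T₃ hc))
      have hd : negativePart T₃ = ∅ := by
        rwa [Finset.inter_self] at this
      exact hneg T₃ (hMT hT₃M) hd
    rw [Finset.mem_sigma]
    constructor
    · rw [hB, Finset.mem_filter, Finset.mem_powersetCard]
      refine ⟨⟨?_, ?_⟩, ?_⟩
      · intro K hK
        rcases Finset.mem_insert.mp hK with rfl | hK
        · exact hT₃M
        · exact hPsub hK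
      · rw [Finset.card_insert_of_notMem hT₃notP, hP2]
      · intro T₁ h1' T₂ h2' hne
        rcases Finset.mem_insert.mp h1' with rfl | h1'
        · rcases Finset.mem_insert.mp h2' with rfl | h2'
          · exact absurd rfl hne
          · rw [Finset.inter_comm]
            exact neg_subset_pos_iff.mp (hT₃cov T₂ h2')
        · rcases Finset.mem_insert.mp h2' with rfl | h2'
          · exact neg_subset_pos_iff.mp (hT₃cov T₁ h1')
          · exact hPpw T₁ h1' T₂ h2' hne
    · exact Finset.mem_insert_self _ _
  · rintro ⟨𝒦, T⟩ hx
    rw [Finset.mem_sigma] at hx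
    have h := Finset.insert_erase hx.2
    simp [h]
  · rintro ⟨P, T₃⟩ hy
    rw [Finset.mem_sigma, hA, Finset.mem_filter] at hy
    have hT₃notP : T₃ ∉ P := by
      intro hc
      have := (neg_subset_pos_iff.mp ((Finset.mem_filter.mp hy.2).2 T₃ hc))
      rw [Finset.inter_self] at this
      exact hneg T₃ (hMT (Finset.mem_filter.mp hy.2).1) this
    have h := Finset.erase_insert hT₃notP
    simp [h]
end
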